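/- Let n ≥ 3 and S_1, ..., S_n > 0, and suppose there exists S > max_i S_i such that either Σ_{i=1}^n arcsin(S_i/S) = π, or Σ_{i=2}^n arcsin(S_i/S) = arcsin(S_1/S) with S_1 the largest of the S_i. Then S_1 < Σ_{i=2}^n S_i. -/
import Mathlib

open Real Finset

lemma abs_sin_sum_le {ι : Type*} (s : Finset ι) (x : ι → ℝ) :
    |Real.sin (∑ i ∈ s, x i)| ≤ ∑ i ∈ s, |Real.sin (x i)| := by
  induction s using Finset.cons_induction with
  | empty => simp
  | cons a s ha ih =>
    rw [Finset.sum_cons, Finset.sum_cons, Real.sin_add]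
    have h1 := abs_add_le (Real.sin (x a) * Real.cos (∑ i ∈ s, x i))
      (Real.cos (x a) * Real.sin (∑ i ∈ s, x i))
    have h2 : |Real.cos (∑ i ∈ s, x i)| ≤ 1 := Real.abs_cos_le_one _
    have h3 : |Real.cos (x a)| ≤ 1 := Real.abs_cos_le_one _
    have h4 : (0:ℝ) ≤ |Real.sin (x a)| := abs_nonneg _
    have h5 : (0:ℝ) ≤ |Real.sin (∑ i ∈ s, x i)| := abs_nonneg _
    rw [abs_mul, abs_mul] at h1
    nlinarith

lemma cos_lt_one_of_pos_of_lt_pi {u : ℝ} (h0 : 0 < u) (hπ : u < Real.pi) :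
    Real.cos u < 1 := by
  have h1 : Real.cos u ≤ 1 := Real.cos_le_one u
  have h2 : Real.cos u ≠ 1 := by
    intro h
    have := (Real.cos_eq_one_iff_of_lt_of_lt (x := u) (by nlinarith [Real.pi_pos])
      (by nlinarith [Real.pi_pos])).1 h
    linarith
  exact lt_of_le_of_ne h1 h2

/-- if `S i > 0` for `i : Fin n` (`n ≥ 3`) and there is `R` larger than every
`S i` such that either `∑ arcsin (S i / R) = π` (circumcenter inside) or
`∑_{i ≠ 0} arcsin (S i / R) = arcsin (S 0 / R)` with `S 0` the largest (circumcenter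
outside), then `S 0 < ∑_{i ≠ 0} S i`. -/
theorem inscribed_in_circle_inequality
    (n : ℕ) [NeZero n] (hn : 3 ≤ n)
    (S : Fin n → ℝ) (hS : ∀ i, 0 < S i)
    (R : ℝ) (hR : ∀ i, S i < R)
    (hcase :
      (∑ i, Real.arcsin (S i / R)) = Real.pi ∨
      ((∀ i, S i ≤ S 0) ∧
        (∑ i ∈ Finset.univ.erase 0, Real.arcsin (S i / R)) = Real.arcsin (S 0 / R))) :
    S 0 < ∑ i ∈ Finset.univ.erase 0, S i := by
  have hR0 : 0 < R := (hS 0).trans (hR 0)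
  set x : Fin n → ℝ := fun i => Real.arcsin (S i / R) with hx
  have hdivpos : ∀ i, 0 < S i / R := fun i => div_pos (hS i) hR0
  have hdivlt : ∀ i, S i / R < 1 := fun i => (div_lt_one hR0).2 (hR i)
  have hsinx : ∀ i, Real.sin (x i) = S i / R := fun i =>
    Real.sin_arcsin (by linarith [hdivpos i]) (le_of_lt (hdivlt i))
  have hxpos : ∀ i, 0 < x i := fun i => Real.arcsin_pos.2 (hdivpos i)
  have hxlt : ∀ i, x i < Real.pi / 2 := fun i => by
    rw [hx]; exact Real.arcsin_lt_pi_div_two.2 (hdivlt i)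
  set s : Finset (Fin n) := Finset.univ.erase 0 with hs
  set T : ℝ := ∑ i ∈ s, x i with hT
  -- sin T = S 0 / R and T < π in both cases
  have key : Real.sin T = S 0 / R ∧ T < Real.pi := by
    rcases hcase with h | ⟨_, h⟩
    · have hsplit : x 0 + T = Real.pi := by
        rw [hT, hs, Finset.add_sum_erase _ x (Finset.mem_univ 0)]; exact h
      have hTeq : T = Real.pi - x 0 := by linarith
      constructor
      · rw [hTeq, Real.sin_pi_sub]; exact hsinx 0
      · linarith [hxpos 0]
    · constructor
      · rw [h]; exact hsinx 0
      · have := Real.arcsin_le_pi_div_two (S 0 / R)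
        rw [h]; linarith [Real.pi_pos]
  obtain ⟨hsinT, hTlt⟩ := key
  -- pick two distinct elements in s
  have ha1 : (1:ℕ) < n := by omega
  have ha2 : (2:ℕ) < n := by omega
  set a : Fin n := ⟨1, ha1⟩ with haa
  set b : Fin n := ⟨2, ha2⟩ with hbb
  have ha0 : a ≠ 0 := by
    simp [haa, Fin.ext_iff, Fin.val_zero]
  have hb0 : b ≠ 0 := by
    simp [hbb, Fin.ext_iff, Fin.val_zero]
  have hba : b ≠ a := by simp [haa, hbb, Fin.ext_iff]
  have hamem : a ∈ s := Finset.mem_erase.2 ⟨ha0, Finset.mem_univ a⟩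
  have hbmem : b ∈ s.erase a := Finset.mem_erase.2 ⟨hba, Finset.mem_erase.2 ⟨hb0, Finset.mem_univ b⟩⟩
  set U : ℝ := ∑ i ∈ s.erase a, x i with hU
  have hTsplit : T = x a + U := by
    rw [hT, hU, Finset.add_sum_erase _ x hamem]
  have hUpos : 0 < U :=
    Finset.sum_pos (fun i _ => hxpos i) ⟨b, hbmem⟩
  have hUlt : U < Real.pi := by linarith [hxpos a]
  have hcosU : Real.cos U < 1 := cos_lt_one_of_pos_of_lt_pi hUpos hUlt
  have hsinU : 0 < Real.sin U := Real.sin_pos_of_pos_of_lt_pi hUpos hUlt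
  have hsinU_le : Real.sin U ≤ ∑ i ∈ s.erase a, (S i / R) := by
    calc Real.sin U ≤ |Real.sin U| := le_abs_self _
      _ ≤ ∑ i ∈ s.erase a, |Real.sin (x i)| := abs_sin_sum_le _ _
      _ = ∑ i ∈ s.erase a, (S i / R) := by
          refine Finset.sum_congr rfl fun i _ => ?_
          rw [hsinx i, abs_of_pos (hdivpos i)]
  have hcosa : Real.cos (x a) ≤ 1 := Real.cos_le_one _
  have hsina : 0 < Real.sin (x a) := by rw [hsinx a]; exact hdivpos a
  have hstep : Real.sin T < Real.sin (x a) + ∑ i ∈ s.erase a, (S i / R) := by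
    rw [hTsplit, Real.sin_add]
    have h1 : Real.sin (x a) * Real.cos U < Real.sin (x a) := by nlinarith
    have h2 : Real.cos (x a) * Real.sin U ≤ Real.sin U := by nlinarith
    linarith
  have hfinal : S 0 / R < ∑ i ∈ s, (S i / R) := by
    rw [← hsinT, ← Finset.add_sum_erase _ (fun i => S i / R) hamem, ← hsinx a]
    exact hstep
  rw [← Finset.sum_div] at hfinal
  calc S 0 = (S 0 / R) * R := by field_simp
    _ < ((∑ i ∈ s, S i) / R) * R := by exact mul_lt_mul_of_pos_right hfinal hR0
    _ = ∑ i ∈ s, S i := by field_simp
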